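/- The function W̃(p) = Σ_{n=1}^N (p_n/β_n)·log( γ_n·(1 − Σ_{l=1}^N p_l) / p_n ) is strictly concave on the open convex set {p ∈ ℝ^N : p_n > 0 for all n and Σ_{n=1}^N p_n < 1}. -/
import Mathlib

/-- Log-sum (concavity of `x ↦ x * log (y/x)`) inequality, non-strict version. -/
lemma keyle (t s a b c d : ℝ) (ht : 0 < t) (hs : 0 < s)
    (ha : 0 < a) (hb : 0 < b) (hc : 0 < c) (hd : 0 < d) :
    t * (a * Real.log (b / a)) + s * (c * Real.log (d / c)) ≤
      (t * a + s * c) * Real.log ((t * b + s * d) / (t * a + s * c)) := by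
  have hX : 0 < t * a + s * c := by positivity
  have hY : 0 < t * b + s * d := by positivity
  have expand : (t * a + s * c) * Real.log ((t * b + s * d) / (t * a + s * c))
      - (t * (a * Real.log (b / a)) + s * (c * Real.log (d / c)))
      = -(t * a * (Real.log b + Real.log (t * a + s * c) - Real.log a - Real.log (t * b + s * d))
          + s * c * (Real.log d + Real.log (t * a + s * c) - Real.log c - Real.log (t * b + s * d))) := by
    rw [Real.log_div hY.ne' hX.ne', Real.log_div hb.ne' ha.ne', Real.log_div hd.ne' hc.ne']
    ring
  have h1 : Real.log (b * (t * a + s * c) / (a * (t * b + s * d)))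
      ≤ b * (t * a + s * c) / (a * (t * b + s * d)) - 1 :=
    Real.log_le_sub_one_of_pos (by positivity)
  have h2 : Real.log (d * (t * a + s * c) / (c * (t * b + s * d)))
      ≤ d * (t * a + s * c) / (c * (t * b + s * d)) - 1 :=
    Real.log_le_sub_one_of_pos (by positivity)
  rw [Real.log_div (by positivity) (by positivity), Real.log_mul hb.ne' hX.ne',
      Real.log_mul ha.ne' hY.ne'] at h1
  rw [Real.log_div (by positivity) (by positivity), Real.log_mul hd.ne' hX.ne',
      Real.log_mul hc.ne' hY.ne'] at h2
  have h1' := mul_le_mul_of_nonneg_left h1 (by positivity : (0:ℝ) ≤ t * a)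
  have h2' := mul_le_mul_of_nonneg_left h2 (by positivity : (0:ℝ) ≤ s * c)
  have E : t * a * (b * (t * a + s * c) / (a * (t * b + s * d)) - 1)
      + s * c * (d * (t * a + s * c) / (c * (t * b + s * d)) - 1) = 0 := by
    field_simp
    ring
  linarith [expand, h1', h2', E]

/-- Log-sum inequality, strict version when the ratios differ. -/
lemma keylt (t s a b c d : ℝ) (ht : 0 < t) (hs : 0 < s)
    (ha : 0 < a) (hb : 0 < b) (hc : 0 < c) (hd : 0 < d) (hne : a * d ≠ b * c) :
    t * (a * Real.log (b / a)) + s * (c * Real.log (d / c)) <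
      (t * a + s * c) * Real.log ((t * b + s * d) / (t * a + s * c)) := by
  have hX : 0 < t * a + s * c := by positivity
  have hY : 0 < t * b + s * d := by positivity
  have expand : (t * a + s * c) * Real.log ((t * b + s * d) / (t * a + s * c))
      - (t * (a * Real.log (b / a)) + s * (c * Real.log (d / c)))
      = -(t * a * (Real.log b + Real.log (t * a + s * c) - Real.log a - Real.log (t * b + s * d))
          + s * c * (Real.log d + Real.log (t * a + s * c) - Real.log c - Real.log (t * b + s * d))) := by
    rw [Real.log_div hY.ne' hX.ne', Real.log_div hb.ne' ha.ne', Real.log_div hd.ne' hc.ne']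
    ring
  have hne1 : b * (t * a + s * c) / (a * (t * b + s * d)) ≠ 1 := by
    intro h
    rw [div_eq_iff (by positivity : a * (t * b + s * d) ≠ 0), one_mul] at h
    apply hne
    have h2 : s * (b * c) = s * (a * d) := by linarith [h]
    have := mul_left_cancel₀ hs.ne' h2
    linarith
  have h1 : Real.log (b * (t * a + s * c) / (a * (t * b + s * d)))
      < b * (t * a + s * c) / (a * (t * b + s * d)) - 1 :=
    Real.log_lt_sub_one_of_pos (by positivity) hne1
  have h2 : Real.log (d * (t * a + s * c) / (c * (t * b + s * d)))
      ≤ d * (t * a + s * c) / (c * (t * b + s * d)) - 1 :=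
    Real.log_le_sub_one_of_pos (by positivity)
  rw [Real.log_div (by positivity) (by positivity), Real.log_mul hb.ne' hX.ne',
      Real.log_mul ha.ne' hY.ne'] at h1
  rw [Real.log_div (by positivity) (by positivity), Real.log_mul hd.ne' hX.ne',
      Real.log_mul hc.ne' hY.ne'] at h2
  have h1' := mul_lt_mul_of_pos_left h1 (by positivity : (0:ℝ) < t * a)
  have h2' := mul_le_mul_of_nonneg_left h2 (by positivity : (0:ℝ) ≤ s * c)
  have E : t * a * (b * (t * a + s * c) / (a * (t * b + s * d)) - 1)
      + s * c * (d * (t * a + s * c) / (c * (t * b + s * d)) - 1) = 0 := by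
    field_simp
    ring
  linarith [expand, h1', h2', E]

/-- For positive weights `γ` and positive rates `β`, the function
`W̃(p) = Σ_n (p_n/β_n) · log(γ_n (1 − Σ_l p_l)/p_n)` is strictly concave on the
open simplex `{p | ∀ n, p_n > 0, Σ_n p_n < 1}`. -/
theorem stmt_7
    (N : ℕ) (hN : 1 ≤ N)
    (γ β : Fin N → ℝ) (hγ : ∀ n, 0 < γ n) (hβ : ∀ n, 0 < β n) :
    StrictConcaveOn ℝ
      {p : Fin N → ℝ | (∀ n, 0 < p n) ∧ (∑ n, p n) < 1}
      (fun p : Fin N → ℝ =>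
        ∑ n, (p n / β n) * Real.log (γ n * (1 - ∑ l, p l) / p n)) := by
  classical
  have frw : ∀ (x : Fin N → ℝ), (∀ n, 0 < x n) → (0 < 1 - ∑ l, x l) →
      (∑ n, (x n / β n) * Real.log (γ n * (1 - ∑ l, x l) / x n))
      = ∑ n, (1 / β n) * (x n * Real.log (γ n)
          + x n * Real.log ((1 - ∑ l, x l) / x n)) := by
    intro x hx hy
    apply Finset.sum_congr rfl
    intro n _
    rw [show γ n * (1 - ∑ l, x l) / x n = γ n * ((1 - ∑ l, x l) / x n) by ring,
        Real.log_mul (hγ n).ne' (div_pos hy (hx n)).ne']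
    ring
  constructor
  · -- convexity of the domain
    intro p hp q hq a b ha hb hab
    obtain ⟨hp1, hp2⟩ := hp
    obtain ⟨hq1, hq2⟩ := hq
    rcases ha.eq_or_lt with rfl | ha'
    · have hb1 : b = 1 := by linarith
      subst hb1
      simpa using ⟨hq1, hq2⟩
    rcases hb.eq_or_lt with rfl | hb'
    · have ha1 : a = 1 := by linarith
      subst ha1
      simpa using ⟨hp1, hp2⟩
    constructor
    · intro n
      simp only [Pi.add_apply, Pi.smul_apply, smul_eq_mul]
      exact add_pos (mul_pos ha' (hp1 n)) (mul_pos hb' (hq1 n))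
    · simp only [Pi.add_apply, Pi.smul_apply, smul_eq_mul]
      rw [Finset.sum_add_distrib, ← Finset.mul_sum, ← Finset.mul_sum]
      nlinarith [mul_lt_mul_of_pos_left hp2 ha', mul_lt_mul_of_pos_left hq2 hb']
  · intro p hp q hq hpq a b ha hb hab
    obtain ⟨hp1, hp2⟩ := hp
    obtain ⟨hq1, hq2⟩ := hq
    have hyp : 0 < 1 - ∑ l, p l := by linarith
    have hyq : 0 < 1 - ∑ l, q l := by linarith
    have hr1 : ∀ n, 0 < (a • p + b • q) n := by
      intro n
      simp only [Pi.add_apply, Pi.smul_apply, smul_eq_mul]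
      exact add_pos (mul_pos ha (hp1 n)) (mul_pos hb (hq1 n))
    have hSr : ∑ l, (a • p + b • q) l = a * ∑ l, p l + b * ∑ l, q l := by
      simp only [Pi.add_apply, Pi.smul_apply, smul_eq_mul]
      rw [Finset.sum_add_distrib, ← Finset.mul_sum, ← Finset.mul_sum]
    have hyr : 1 - ∑ l, (a • p + b • q) l = a * (1 - ∑ l, p l) + b * (1 - ∑ l, q l) := by
      rw [hSr]; linear_combination -hab
    have hyr' : 0 < 1 - ∑ l, (a • p + b • q) l := by
      rw [hyr]
      exact add_pos (mul_pos ha hyp) (mul_pos hb hyq)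
    -- existence of an index where the ratios differ
    have hex : ∃ n, p n * (1 - ∑ l, q l) ≠ (1 - ∑ l, p l) * q n := by
      by_contra h
      push_neg at h
      have hsum : (∑ l, p l) * (1 - ∑ l, q l) = (1 - ∑ l, p l) * (∑ l, q l) := by
        have h2 := Finset.sum_congr rfl (fun n (_ : n ∈ Finset.univ) => h n)
        rw [← Finset.sum_mul, ← Finset.mul_sum] at h2
        exact h2
      have hSeq : (∑ l, p l) = (∑ l, q l) := by linear_combination hsum
      apply hpq
      funext n
      have h2 : p n * (1 - ∑ l, q l) = q n * (1 - ∑ l, q l) := by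
        linear_combination h n - q n * hSeq
      exact mul_right_cancel₀ hyq.ne' h2
    obtain ⟨n₀, hn₀⟩ := hex
    simp only [smul_eq_mul]
    rw [frw p hp1 hyp, frw q hq1 hyq, frw _ hr1 hyr']
    simp only [hyr]
    simp only [Pi.add_apply, Pi.smul_apply, smul_eq_mul]
    rw [Finset.mul_sum, Finset.mul_sum, ← Finset.sum_add_distrib]
    apply Finset.sum_lt_sum
    · intro n _
      have key := keyle a b (p n) (1 - ∑ l, p l) (q n) (1 - ∑ l, q l)
        ha hb (hp1 n) hyp (hq1 n) hyq
      have e1 : a * (1 / β n * (p n * Real.log (γ n) + p n * Real.log ((1 - ∑ l, p l) / p n)))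
          + b * (1 / β n * (q n * Real.log (γ n) + q n * Real.log ((1 - ∑ l, q l) / q n)))
          = (1 / β n) * ((a * p n + b * q n) * Real.log (γ n)
            + (a * (p n * Real.log ((1 - ∑ l, p l) / p n))
               + b * (q n * Real.log ((1 - ∑ l, q l) / q n)))) := by ring
      rw [e1]
      apply mul_le_mul_of_nonneg_left _ (one_div_pos.mpr (hβ n)).le
      linarith [key]
    · refine ⟨n₀, Finset.mem_univ n₀, ?_⟩
      have key := keylt a b (p n₀) (1 - ∑ l, p l) (q n₀) (1 - ∑ l, q l)
        ha hb (hp1 n₀) hyp (hq1 n₀) hyq hn₀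
      have e1 : a * (1 / β n₀ * (p n₀ * Real.log (γ n₀) + p n₀ * Real.log ((1 - ∑ l, p l) / p n₀)))
          + b * (1 / β n₀ * (q n₀ * Real.log (γ n₀) + q n₀ * Real.log ((1 - ∑ l, q l) / q n₀)))
          = (1 / β n₀) * ((a * p n₀ + b * q n₀) * Real.log (γ n₀)
            + (a * (p n₀ * Real.log ((1 - ∑ l, p l) / p n₀))
               + b * (q n₀ * Real.log ((1 - ∑ l, q l) / q n₀)))) := by ring
      rw [e1]
      apply mul_lt_mul_of_pos_left _ (one_div_pos.mpr (hβ n₀))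
      linarith [key]
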